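/- arXiv:1808.04478 — 3 statements merged into one kernel-verified Lean document; each statement's English description precedes it below -/
import Mathlib

section
/- For all n ≥ 1, the n-step value function of the two-armed bandit cost problem satisfies Vₙ(g,s) = (1/2ⁿ)g² + (1 − 1/2ⁿ)μg + μs + (1/2^{n+2} − 1/4)μ² + (n/2)μ when g < μ/2, and Vₙ(g,s) = g² + μs + n·μ/2 when g ≥ μ/2. -/
/-- The value functions of the two-armed bandit cost problem, defined by
`V₀ = U` and the Bellman recursion `Vₙ₊₁(g,s) = inf_{a ∈ [0,1]} (1/4)(Vₙ(g,s) + Vₙ(g+a,s)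
+ Vₙ(g,s+1−a) + Vₙ(g+a,s+1−a))`. -/
noncomputable def banditV (μ : ℝ) : ℕ → ℝ → ℝ → ℝ
  | 0 => fun g s => g^2 + μ*s
  | n+1 => fun g s =>
      sInf ((fun a => (1/4) * (banditV μ n g s + banditV μ n (g+a) s
        + banditV μ n g (s+1-a) + banditV μ n (g+a) (s+1-a))) '' Set.Icc (0:ℝ) 1)

/-- The `n`-independent part of the closed form, with `p = 1/2^n`. -/
noncomputable def banditG (μ p g : ℝ) : ℝ :=
  if g < μ/2 then p*g^2 + (1-p)*μ*g + (p/4 - 1/4)*μ^2 else g^2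

lemma banditG_step_le (μ p g a : ℝ) (hμ0 : 0 < μ) (hμ2 : μ ≤ 2) (hp0 : 0 < p)
    (hg : 0 ≤ g) (ha0 : 0 ≤ a) (ha1 : a ≤ 1) :
    banditG μ (p/2) g + μ/2 ≤
      (1/2)*banditG μ p g + (1/2)*banditG μ p (g+a) + μ*(1-a)/2 := by
  unfold banditG
  split_ifs with h1 h2 h2
  · nlinarith [mul_nonneg hp0.le (sq_nonneg (g+a-μ/2))]
  · nlinarith [sq_nonneg (g+a-μ/2)]
  · linarith
  · nlinarith [mul_nonneg ha0 (by linarith : (0:ℝ) ≤ 2*g + a - μ)]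

lemma banditG_step_eq (μ p g : ℝ) (hμ0 : 0 < μ) (hμ2 : μ ≤ 2) (hg : 0 ≤ g) :
    ∃ a ∈ Set.Icc (0:ℝ) 1,
      banditG μ (p/2) g + μ/2 =
        (1/2)*banditG μ p g + (1/2)*banditG μ p (g+a) + μ*(1-a)/2 := by
  by_cases h : g < μ/2
  · refine ⟨μ/2 - g, ⟨by linarith, by linarith⟩, ?_⟩
    have hge : g + (μ/2 - g) = μ/2 := by ring
    rw [hge]
    unfold banditG
    rw [if_pos h, if_pos h, if_neg (lt_irrefl _)]
    ring
  · refine ⟨0, ⟨le_refl _, zero_le_one⟩, ?_⟩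
    rw [add_zero]
    simp only [banditG, if_neg h]
    ring

lemma banditV_closed (μ : ℝ) (hμ0 : 0 < μ) (hμ2 : μ ≤ 2) :
    ∀ n, ∀ g s : ℝ, 0 ≤ g → 0 ≤ s →
      banditV μ n g s = banditG μ (1/2^n) g + (n:ℝ)*μ/2 + μ*s := by
  intro n
  induction n with
  | zero =>
    intro g s hg hs
    show g^2 + μ*s = _
    unfold banditG
    split_ifs <;> push_cast <;> ring
  | succ n ih =>
    intro g s hg hs
    have hp0 : (0:ℝ) < 1/2^n := by positivity
    set p : ℝ := 1/2^n with hp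
    have hpsucc : (1:ℝ)/2^(n+1) = p/2 := by
      rw [hp, pow_succ]; ring
    have hrw : ∀ a : ℝ, 0 ≤ a → a ≤ 1 →
        (1/4) * (banditV μ n g s + banditV μ n (g+a) s
          + banditV μ n g (s+1-a) + banditV μ n (g+a) (s+1-a))
        = (1/2)*banditG μ p g + (1/2)*banditG μ p (g+a)
            + (n:ℝ)*μ/2 + μ*s + μ*(1-a)/2 := by
      intro a h0 h1
      rw [ih g s hg hs, ih (g+a) s (by linarith) hs,
        ih g (s+1-a) hg (by linarith), ih (g+a) (s+1-a) (by linarith) (by linarith)]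
      ring
    show sInf _ = _
    have hTgoal : banditG μ (1/2^(n+1)) g + ((n:ℝ)+1)*μ/2 + μ*s
        = banditG μ (p/2) g + μ/2 + (n:ℝ)*μ/2 + μ*s := by
      rw [hpsucc]; ring
    have : sInf ((fun a => (1/4) * (banditV μ n g s + banditV μ n (g+a) s
        + banditV μ n g (s+1-a) + banditV μ n (g+a) (s+1-a))) '' Set.Icc (0:ℝ) 1)
        = banditG μ (p/2) g + μ/2 + (n:ℝ)*μ/2 + μ*s := by
      apply IsLeast.csInf_eq
      constructor
      · obtain ⟨a, ⟨ha0, ha1⟩, heq⟩ := banditG_step_eq μ p g hμ0 hμ2 hg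
        exact ⟨a, ⟨ha0, ha1⟩, by dsimp only; rw [hrw a ha0 ha1]; linarith⟩
      · rintro x ⟨a, ⟨ha0, ha1⟩, rfl⟩
        dsimp only
        rw [hrw a ha0 ha1]
        have := banditG_step_le μ p g a hμ0 hμ2 hp0 hg ha0 ha1
        linarith
    rw [this, ← hTgoal]
    push_cast
    ring_nf

theorem stmt_1 (μ : ℝ) (hμ0 : 0 < μ) (hμ2 : μ ≤ 2) (n : ℕ) (hn : 1 ≤ n)
    (g s : ℝ) (hg : 0 ≤ g) (hs : 0 ≤ s) :
    banditV μ n g s =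
      if g < μ/2 then
        (1/2^n)*g^2 + (1 - 1/2^n)*μ*g + μ*s + (1/2^(n+2) - 1/4)*μ^2 + ((n:ℝ)/2)*μ
      else g^2 + μ*s + (n:ℝ)*μ/2 := by
  rw [banditV_closed μ hμ0 hμ2 n g s hg hs]
  unfold banditG
  have h2 : (1:ℝ)/2^(n+2) = (1/2^n)/4 := by
    rw [pow_add]; norm_num; ring
  split_ifs with h
  · rw [h2]; ring
  · ring
end

section
/- In the two-armed bandit problem, for each n, the minimizer of the map a ↦ tₙ(g,s,a) := (1/4)(Vₙ(g,s) + Vₙ(g+a,s) + Vₙ(g,s+1−a) + Vₙ(g+a,s+1−a)) over a ∈ [0,1] is a* = max(μ/2 − g, 0), where Vₙ has the explicit form Vₙ(g,s) = (1/2ⁿ)g² + (1−1/2ⁿ)μg + μs + (1/2^{n+2} − 1/4)μ² + (n/2)μ for g < μ/2 and Vₙ(g,s) = g² + μs + nμ/2 for g ≥ μ/2. -/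
set_option maxHeartbeats 1600000


theorem stmt_2 (μ g s : ℝ) (hμ0 : 0 < μ) (hμ2 : μ ≤ 2) (hg : 0 ≤ g) (hs : 0 ≤ s) (n : ℕ) :
    let V : ℝ → ℝ → ℝ := fun g s =>
      if g < μ/2 then
        (1/2^n)*g^2 + (1 - 1/2^n)*μ*g + μ*s + (1/2^(n+2) - 1/4)*μ^2 + ((n:ℝ)/2)*μ
      else g^2 + μ*s + (n:ℝ)*μ/2
    let t : ℝ → ℝ := fun a => (1/4) * (V g s + V (g+a) s + V g (s+1-a) + V (g+a) (s+1-a))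
    let astar : ℝ := max (μ/2 - g) 0
    astar ∈ Set.Icc (0:ℝ) 1 ∧ (∀ a ∈ Set.Icc (0:ℝ) 1, t astar ≤ t a) ∧
      (∀ a ∈ Set.Icc (0:ℝ) 1, t a = t astar → a = astar) := by
  intro V t astar
  have hc0 : (0:ℝ) < 1/2^n := by positivity
  have hc1 : (1:ℝ)/2^n ≤ 1 := by
    rw [div_le_one (by positivity)]
    exact one_le_pow₀ (by norm_num)
  have h4 : (1:ℝ)/2^(n+2) = (1/2^n)/4 := by
    rw [pow_add]; norm_num; ring
  have hmem : astar ∈ Set.Icc (0:ℝ) 1 := by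
    constructor
    · exact le_max_right _ _
    · apply max_le <;> linarith
  refine ⟨hmem, ?_, ?_⟩
  · rcases lt_or_ge g (μ/2) with hglt | hge
    · have hA : max (μ/2 - g) 0 = μ/2 - g := max_eq_left (by linarith)
      intro a ⟨ha0, ha1⟩
      simp only [t, V, astar, hA, h4]
      split_ifs with h1 h2 h3 <;>
        nlinarith [mul_nonneg hc0.le (sq_nonneg (g + a - μ/2)), sq_nonneg (g + a - μ/2),
          mul_pos hc0 hμ0, sq_nonneg μ]
    · have hA : max (μ/2 - g) 0 = 0 := max_eq_right (by linarith)
      intro a ⟨ha0, ha1⟩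
      simp only [t, V, astar, hA, h4]
      split_ifs with h1 h2 h3 <;>
        nlinarith [sq_nonneg a, mul_nonneg ha0 (by linarith : (0:ℝ) ≤ 2*g - μ)]
  · rcases lt_or_ge g (μ/2) with hglt | hge
    · have hA : max (μ/2 - g) 0 = μ/2 - g := max_eq_left (by linarith)
      intro a ⟨ha0, ha1⟩ heq
      have hkey : (g + a - μ/2)^2 ≤ 0 := by
        simp only [t, V, astar, hA, h4] at heq
        split_ifs at heq with h1 h2 h3 <;>
          nlinarith [sq_nonneg (g + a - μ/2), mul_pos hc0 hμ0, sq_nonneg μ]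
      have h0 : g + a - μ/2 = 0 := by nlinarith [sq_nonneg (g + a - μ/2)]
      simp only [astar, hA]
      linarith
    · have hA : max (μ/2 - g) 0 = 0 := max_eq_right (by linarith)
      intro a ⟨ha0, ha1⟩ heq
      have hkey : a^2 ≤ 0 := by
        simp only [t, V, astar, hA, h4] at heq
        split_ifs at heq with h1 h2 h3 <;>
          nlinarith [mul_nonneg ha0 (by linarith : (0:ℝ) ≤ 2*g - μ)]
      have h0 : a = 0 := by nlinarith [sq_nonneg a]
      simp only [astar, hA]
      linarith
end

section
/- With ψⁱ₀ := θ₀ and ψⁱₙ(s) := E^π_{θ₀}[1{Sₙ = s}·exp(λⁱ Σ_{k=0}^{n} Ĉ(Sₖ,Aₖ))·Rₙ | Fₙ], the recursion ψⁱₙ = |Y|·Mⁱ(A_{n−1},Yₙ)·ψⁱ_{n−1} holds, where Mⁱ(a,y)[s,s'] := (e^{λⁱ Ĉ(s,a)} P̂(s'|s;a) Q(y|s'))ᵀ and Fₙ = σ((Aₖ, Y_{k+1}), k < n). -/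
/-- The (unnormalized) information state `ψⁱₙ(s) = E[1{Sₙ = s} · exp(λ Σ_k Ĉ(Sₖ,Aₖ)) · Rₙ | Fₙ]`
of the risk-sensitive POMDP, computed under the reference measure as an explicit finite sum
over hidden state paths (conditional on the realized actions `a` and observations `y`);
here `Rₙ = ∏_{k<n} |Y| Q(Y_{k+1}|S_{k+1})`. -/
noncomputable def psiRS {S A Y : Type*} [Fintype S] [Fintype Y] [DecidableEq S]
    (θ : S → ℝ) (Phat : A → S → S → ℝ) (Q : S → Y → ℝ) (Ch : S → A → ℝ) (lam : ℝ)
    (a : ℕ → A) (y : ℕ → Y) (n : ℕ) (s : S) : ℝ :=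
  (Fintype.card Y : ℝ)^n *
    ∑ h ∈ Finset.univ.filter (fun h : Fin (n+1) → S => h (Fin.last n) = s),
      θ (h 0) * ∏ k : Fin n,
        (Real.exp (lam * Ch (h k.castSucc) (a k)) * Phat (a k) (h k.castSucc) (h k.succ) *
          Q (h k.succ) (y k))

/-- With `ψ₀ = θ₀`, the recursion `ψₙ = |Y| · M(A_{n-1}, Yₙ) ψ_{n-1}` holds, where
`M(a,y)[s,s'] = (e^{λĈ(s,a)} P̂(s'|s;a) Q(y|s'))ᵀ`. -/
theorem stmt_17 {S A Y : Type*} [Fintype S] [Fintype Y] [DecidableEq S]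
    (θ : S → ℝ) (hθ0 : ∀ s, 0 ≤ θ s) (hθ1 : ∑ s, θ s = 1)
    (Phat : A → S → S → ℝ) (hP0 : ∀ a s s', 0 ≤ Phat a s s')
    (hP1 : ∀ a s, ∑ s', Phat a s s' = 1)
    (Q : S → Y → ℝ) (hQ0 : ∀ s y, 0 ≤ Q s y) (hQ1 : ∀ s, ∑ y, Q s y = 1)
    (Ch : S → A → ℝ) (lam : ℝ) (hlam : lam ≠ 0) (a : ℕ → A) (y : ℕ → Y) :
    (∀ s, psiRS θ Phat Q Ch lam a y 0 s = θ s) ∧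
    ∀ (n : ℕ) (s' : S),
      psiRS θ Phat Q Ch lam a y (n+1) s' =
        (Fintype.card Y : ℝ) *
          ∑ s, (Real.exp (lam * Ch s (a n)) * Phat (a n) s s' * Q s' (y n)) *
            psiRS θ Phat Q Ch lam a y n s := by
  constructor
  · intro s
    simp only [psiRS, pow_zero, one_mul, Finset.prod_empty, Finset.sum_filter]
    rw [Fintype.sum_eq_single (fun _ : Fin 1 => s)]
    · simp [Fin.last]
    · intro h hh
      have hne : h (Fin.last 0) ≠ s := by
        intro hc; apply hh; funext i
        have : i = Fin.last 0 := Subsingleton.elim _ _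
        rw [this, hc]
      rw [if_neg hne]
  · intro n s'
    simp only [psiRS]
    -- Step 1: reindex paths of length n+2 ending at s' by their initial segment
    have step1 :
        (∑ h ∈ Finset.univ.filter (fun h : Fin (n+2) → S => h (Fin.last (n+1)) = s'),
          θ (h 0) * ∏ k : Fin (n+1),
            (Real.exp (lam * Ch (h k.castSucc) (a k)) * Phat (a k) (h k.castSucc) (h k.succ) *
              Q (h k.succ) (y k)))
        = ∑ g : Fin (n+1) → S,
            θ ((Fin.snoc g s' : Fin (n+2) → S) 0) * ∏ k : Fin (n+1),
              (Real.exp (lam * Ch ((Fin.snoc g s' : Fin (n+2) → S) k.castSucc) (a k)) *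
                Phat (a k) ((Fin.snoc g s' : Fin (n+2) → S) k.castSucc)
                  ((Fin.snoc g s' : Fin (n+2) → S) k.succ) *
                Q ((Fin.snoc g s' : Fin (n+2) → S) k.succ) (y k)) := by
      refine Finset.sum_nbij' (fun h => Fin.init h) (fun g => Fin.snoc g s') ?_ ?_ ?_ ?_ ?_
      · intro h _; exact Finset.mem_univ _
      · intro g _; simp
      · intro h hh
        have := (Finset.mem_filter.1 hh).2
        rw [← this]; exact Fin.snoc_init_self h
      · intro g _; funext i; simp [Fin.init]
      · intro h hh
        have := (Finset.mem_filter.1 hh).2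
        rw [← this, Fin.snoc_init_self h]
    rw [step1]
    -- Step 2: group paths by their endpoint
    rw [← Finset.sum_fiberwise Finset.univ (fun g : Fin (n+1) → S => g (Fin.last n))]
    -- Step 3: simplify each term
    rw [Finset.mul_sum, Finset.mul_sum]
    refine Finset.sum_congr rfl ?_
    intro s _
    have hsum : (∑ g ∈ Finset.univ.filter (fun g : Fin (n+1) → S => g (Fin.last n) = s),
          θ ((Fin.snoc g s' : Fin (n+2) → S) 0) * ∏ k : Fin (n+1),
            (Real.exp (lam * Ch ((Fin.snoc g s' : Fin (n+2) → S) k.castSucc) (a k)) *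
              Phat (a k) ((Fin.snoc g s' : Fin (n+2) → S) k.castSucc)
                ((Fin.snoc g s' : Fin (n+2) → S) k.succ) *
              Q ((Fin.snoc g s' : Fin (n+2) → S) k.succ) (y k)))
        = ∑ g ∈ Finset.univ.filter (fun g : Fin (n+1) → S => g (Fin.last n) = s),
            (θ (g 0) * ∏ k : Fin n,
              (Real.exp (lam * Ch (g k.castSucc) (a k)) * Phat (a k) (g k.castSucc) (g k.succ) *
                Q (g k.succ) (y k))) *
            (Real.exp (lam * Ch s (a n)) * Phat (a n) s s' * Q s' (y n)) := by
      refine Finset.sum_congr rfl ?_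
      intro g hg
      have hgs : g (Fin.last n) = s := (Finset.mem_filter.1 hg).2
      have h0 : (Fin.snoc g s' : Fin (n+2) → S) 0 = g 0 := by
        have : (0 : Fin (n+2)) = Fin.castSucc 0 := rfl
        rw [this, Fin.snoc_castSucc]
      have hprod : (∏ k : Fin (n+1),
          (Real.exp (lam * Ch ((Fin.snoc g s' : Fin (n+2) → S) k.castSucc) (a k)) *
            Phat (a k) ((Fin.snoc g s' : Fin (n+2) → S) k.castSucc)
              ((Fin.snoc g s' : Fin (n+2) → S) k.succ) *
            Q ((Fin.snoc g s' : Fin (n+2) → S) k.succ) (y k)))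
          = (∏ k : Fin n,
              (Real.exp (lam * Ch (g k.castSucc) (a k)) * Phat (a k) (g k.castSucc) (g k.succ) *
                Q (g k.succ) (y k))) *
            (Real.exp (lam * Ch s (a n)) * Phat (a n) s s' * Q s' (y n)) := by
        rw [Fin.prod_univ_castSucc]
        congr 1
        · refine Finset.prod_congr rfl ?_
          intro k _
          have h1 : (Fin.snoc g s' : Fin (n+2) → S) k.castSucc.castSucc = g k.castSucc :=
            Fin.snoc_castSucc ..
          have h2 : (Fin.snoc g s' : Fin (n+2) → S) k.castSucc.succ = g k.succ := by
            rw [Fin.succ_castSucc, Fin.snoc_castSucc]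
          rw [h1, h2]
          norm_num [Fin.coe_castSucc]
        · have h1 : (Fin.snoc g s' : Fin (n+2) → S) (Fin.last n).castSucc = s := by
            rw [Fin.snoc_castSucc, hgs]
          have h2 : (Fin.snoc g s' : Fin (n+2) → S) (Fin.last n).succ = s' := by
            have : (Fin.last n).succ = Fin.last (n+1) := rfl
            rw [this, Fin.snoc_last]
          rw [h1, h2]
          norm_num [Fin.val_last]
      rw [h0, hprod]
      ring
    rw [hsum, ← Finset.sum_mul]
    rw [pow_succ]
    ring
end
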